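/- For any n ≥ 2, a finite group G is abelian if and only if every word map w : Gⁿ → G in n variables has fibers of uniform size over its image (i.e., all nonempty fibers of w have equal cardinality). -/

import Mathlib

/-- For any `n ≥ 2`, a finite group `G` is abelian iff every
`n`-variable word map `Gⁿ → G` has fibers of uniform size over its image
(any two nonempty fibers have equal cardinality). -/
theorem stmt_14 (G : Type*) [Group G] [Finite G] (n : ℕ) (hn : 2 ≤ n) :
    (∀ a b : G, a * b = b * a) ↔
      ∀ w : FreeGroup (Fin n), ∀ g h : G,
        (∃ v : Fin n → G, FreeGroup.lift v w = g) →
        (∃ v : Fin n → G, FreeGroup.lift v w = h) →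
        Nat.card {v : Fin n → G // FreeGroup.lift v w = g} =
          Nat.card {v : Fin n → G // FreeGroup.lift v w = h} := by
  haveI : NeZero n := ⟨by omega⟩
  constructor
  · intro hcomm w g h hg hh
    obtain ⟨vg, hvg⟩ := hg
    obtain ⟨vh, hvh⟩ := hh
    have key : ∀ (u u' : Fin n → G) (w : FreeGroup (Fin n)),
        FreeGroup.lift (fun i => u i * u' i) w
          = FreeGroup.lift u w * FreeGroup.lift u' w := by
      intro u u' w
      induction w with
      | C1 => simp
      | of i =>
        simp only [show (pure i : FreeGroup (Fin n)) = FreeGroup.of i from rfl,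
          FreeGroup.lift_apply_of]
      | inv_of i _ =>
        simp only [map_inv, show (pure i : FreeGroup (Fin n)) = FreeGroup.of i from rfl,
          FreeGroup.lift_apply_of]
        rw [mul_inv_rev, hcomm]
      | mul x y ihx ihy =>
        simp only [map_mul, ihx, ihy]
        rw [mul_assoc, mul_assoc]
        congr 1
        rw [← mul_assoc, ← mul_assoc, hcomm (FreeGroup.lift u' x)]
    refine Nat.card_congr ⟨fun ⟨v, hv⟩ => ⟨fun i => vh i * (vg i)⁻¹ * v i, ?_⟩,
      fun ⟨v, hv⟩ => ⟨fun i => vg i * (vh i)⁻¹ * v i, ?_⟩, ?_, ?_⟩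
    · have := key (fun i => vh i * (vg i)⁻¹) v w
      have h2 := key vh (fun i => (vg i)⁻¹) w
      have h3 := key vg (fun i => (vg i)⁻¹) w
      simp only [mul_inv_cancel] at h3
      have h4 : FreeGroup.lift (fun _ : Fin n => (1 : G)) w = 1 := by
        have : (FreeGroup.lift (fun _ : Fin n => (1 : G))) = 1 := by
          apply FreeGroup.ext_hom; intro a; simp
        rw [this]; rfl
      rw [h4] at h3
      have h5 : FreeGroup.lift (fun i => (vg i)⁻¹) w = (FreeGroup.lift vg w)⁻¹ :=
        eq_inv_of_mul_eq_one_right (by rw [← h3])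
      simp only [mul_assoc] at this ⊢
      rw [this, h2, h5, hvg, hvh, hv]
      group
    · have := key (fun i => vg i * (vh i)⁻¹) v w
      have h2 := key vg (fun i => (vh i)⁻¹) w
      have h3 := key vh (fun i => (vh i)⁻¹) w
      simp only [mul_inv_cancel] at h3
      have h4 : FreeGroup.lift (fun _ : Fin n => (1 : G)) w = 1 := by
        have : (FreeGroup.lift (fun _ : Fin n => (1 : G))) = 1 := by
          apply FreeGroup.ext_hom; intro a; simp
        rw [this]; rfl
      rw [h4] at h3
      have h5 : FreeGroup.lift (fun i => (vh i)⁻¹) w = (FreeGroup.lift vh w)⁻¹ :=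
        eq_inv_of_mul_eq_one_right (by rw [← h3])
      simp only [mul_assoc] at this ⊢
      rw [this, h2, h5, hvh, hvg, hv]
      group
    · rintro ⟨v, hv⟩
      ext i
      simp [mul_assoc]
    · rintro ⟨v, hv⟩
      ext i
      simp [mul_assoc]
  · intro hu a b
    by_contra hab
    set g : G := a * b * a⁻¹ * b⁻¹ with hgdef
    have hg1 : g ≠ 1 := by
      intro h
      apply hab
      have : a * b * a⁻¹ * b⁻¹ * (b * a) = 1 * (b * a) := by rw [← hgdef, h]
      rw [one_mul] at this
      rw [← this]; group
    have h01 : (0 : Fin n) ≠ 1 := by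
      intro h
      have := congrArg Fin.val h
      simp [Fin.val_one', Nat.mod_eq_of_lt (by omega : 1 < n)] at this
    set w : FreeGroup (Fin n) :=
      FreeGroup.of 0 * FreeGroup.of 1 * (FreeGroup.of 0)⁻¹ * (FreeGroup.of 1)⁻¹ with hw
    have hlift : ∀ v : Fin n → G,
        FreeGroup.lift v w = v 0 * v 1 * (v 0)⁻¹ * (v 1)⁻¹ := by
      intro v; simp [hw]
    have hmemg : ∃ v : Fin n → G, FreeGroup.lift v w = g := by
      refine ⟨fun i => if i = 0 then a else if i = 1 then b else 1, ?_⟩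
      rw [hlift]
      simp [h01.symm, h01, hgdef]
    have hmem1 : ∃ v : Fin n → G, FreeGroup.lift v w = 1 := by
      refine ⟨fun _ => 1, ?_⟩
      rw [hlift]; group
    have heq := hu w g 1 hmemg hmem1
    simp only [hlift] at heq
    -- Now derive a strict inequality contradiction
    haveI : Fintype G := Fintype.ofFinite G
    classical
    -- choice of a witness commutator partner
    let y : G → G := fun x => if hx : ∃ z, x * z * x⁻¹ * z⁻¹ = g then hx.choose else 1
    have hy : ∀ x : G, (∃ z, x * z * x⁻¹ * z⁻¹ = g) → x * y x * x⁻¹ * (y x)⁻¹ = g := by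
      intro x hx
      simp only [y, dif_pos hx]
      exact hx.choose_spec
    let φ : {v : Fin n → G // v 0 * v 1 * (v 0)⁻¹ * (v 1)⁻¹ = g} →
        {v : Fin n → G // v 0 * v 1 * (v 0)⁻¹ * (v 1)⁻¹ = 1} := by
      refine fun ⟨v, hv⟩ => ⟨Function.update v 1 ((v 1)⁻¹ * y (v 0)), ?_⟩
      have hyx := hy (v 0) ⟨v 1, hv⟩
      rw [Function.update_of_ne h01, Function.update_self]
      have e1 : v 0 * v 1 * (v 0)⁻¹ = g * v 1 := by
        rw [← hv]; group
      have e2 : v 0 * y (v 0) * (v 0)⁻¹ = g * y (v 0) := by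
        rw [← hyx]; group
      have e3 : v 0 * ((v 1)⁻¹ * y (v 0)) * (v 0)⁻¹ = (g * v 1)⁻¹ * (g * y (v 0)) := by
        rw [← e1, ← e2]; group
      rw [e3]; group
    have hφinj : Function.Injective φ := by
      rintro ⟨v, hv⟩ ⟨v', hv'⟩ hvv
      have hvv' : Function.update v 1 ((v 1)⁻¹ * y (v 0)) =
          Function.update v' 1 ((v' 1)⁻¹ * y (v' 0)) := congrArg Subtype.val hvv
      have h0 : v 0 = v' 0 := by
        have := congrFun hvv' 0
        rwa [Function.update_of_ne h01, Function.update_of_ne h01] at this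
      refine Subtype.ext (funext fun i => ?_)
      by_cases hi : i = 1
      · subst hi
        have := congrFun hvv' 1
        rw [Function.update_self, Function.update_self, h0] at this
        exact inv_injective (mul_right_cancel this)
      · have := congrFun hvv' i
        rwa [Function.update_of_ne hi, Function.update_of_ne hi] at this
    have hone : (⟨fun _ => 1, by group⟩ :
        {v : Fin n → G // v 0 * v 1 * (v 0)⁻¹ * (v 1)⁻¹ = 1}) ∉ Set.range φ := by
      rintro ⟨⟨v, hv⟩, hval⟩
      have hv0 : v 0 ≠ 1 := by
        intro h0
        apply hg1
        rw [h0] at hv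
        simpa using hv.symm
      apply hv0
      have := congrArg Subtype.val hval
      have := congrFun this 0
      simp only [φ] at this
      rwa [Function.update_of_ne h01] at this
    have hlt := Fintype.card_lt_of_injective_of_notMem φ hφinj hone
    have hlt' : Nat.card {v : Fin n → G // v 0 * v 1 * (v 0)⁻¹ * (v 1)⁻¹ = g} <
        Nat.card {v : Fin n → G // v 0 * v 1 * (v 0)⁻¹ * (v 1)⁻¹ = 1} := by
      simpa only [Nat.card_eq_fintype_card] using hlt
    exact absurd heq (Nat.ne_of_lt hlt')
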